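/- Let K be a finite field with q elements, where q ≡ 1 (mod 4) and q > 5. Then there exist X, Y ∈ K such that X and Y are both nonsquares in K, X/Y is a fourth power in K (i.e. X = u⁴·Y for some u ∈ K), X + 1 is a nonzero square in K, and Y + 1 is a nonsquare in K. -/

import Mathlib

open Finset

namespace Stmt9Aux

set_option linter.unusedSectionVars false
set_option linter.unusedVariables false


variable {K : Type*} [Field K] [Fintype K]

/-- Fourth-power relation: `z` is `u⁴` times `c`. -/
def Rel (z c : K) : Prop := ∃ u : K, u ≠ 0 ∧ z = u ^ 4 * c

lemma ns_ne_zero {a : K} (h : ¬IsSquare a) : a ≠ 0 := by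
  rintro rfl; exact h ⟨0, by simp⟩

lemma ns_mul_ns {a b : K} (ha : ¬IsSquare a) (hb : ¬IsSquare b) : IsSquare (a * b) := by
  classical
  have ha' := (quadraticChar_neg_one_iff_not_isSquare (F := K)).mpr ha
  have hb' := (quadraticChar_neg_one_iff_not_isSquare (F := K)).mpr hb
  have hab : a * b ≠ 0 := mul_ne_zero (ns_ne_zero ha) (ns_ne_zero hb)
  have : quadraticChar K (a * b) = 1 := by rw [map_mul, ha', hb']; ring
  exact (quadraticChar_one_iff_isSquare hab).mp this

lemma ns_mul_sq {a b : K} (ha : ¬IsSquare a) (hb : IsSquare b) (hb0 : b ≠ 0) :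
    ¬IsSquare (a * b) := by
  rintro ⟨s, hs⟩
  obtain ⟨t, ht⟩ := hb
  have ht0 : t ≠ 0 := by rintro rfl; simp at ht; exact hb0 ht
  apply ha
  refine ⟨s * t⁻¹, ?_⟩
  have key : a * (t * t) = s * s := by linear_combination hs - a * ht
  field_simp
  linear_combination key

lemma exists_sq_factor {z a : K} (hz : ¬IsSquare z) (ha : ¬IsSquare a) :
    ∃ t : K, t ≠ 0 ∧ z = t ^ 2 * a := by
  obtain ⟨r, hr⟩ := ns_mul_ns hz ha
  have ha0 := ns_ne_zero ha
  have hz0 := ns_ne_zero hz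
  have hr0 : r ≠ 0 := by
    rintro rfl; rw [mul_zero] at hr; exact mul_ne_zero hz0 ha0 hr
  refine ⟨r * a⁻¹, mul_ne_zero hr0 (inv_ne_zero ha0), ?_⟩
  field_simp
  linear_combination hr

lemma rel_ns {z c : K} (hc : ¬IsSquare c) (h : Rel z c) : ¬IsSquare z := by
  obtain ⟨u, hu0, rfl⟩ := h
  have : ¬IsSquare (c * u ^ 4) :=
    ns_mul_sq hc ⟨u ^ 2, by ring⟩ (pow_ne_zero 4 hu0)
  rwa [mul_comm] at this

lemma rel_trans {x y z : K} (h1 : Rel x y) (h2 : Rel y z) : Rel x z := by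
  obtain ⟨u, hu, rfl⟩ := h1
  obtain ⟨v, hv, rfl⟩ := h2
  exact ⟨u * v, mul_ne_zero hu hv, by ring⟩

lemma q4 {i t u : K} (hi : i ^ 2 = -1) (h : t ^ 2 = u ^ 4) : IsSquare t := by
  have hfac : (t - u ^ 2) * (t + u ^ 2) = 0 := by linear_combination h
  rcases mul_eq_zero.mp hfac with h' | h'
  · have : t = u ^ 2 := by linear_combination h'
    exact ⟨u, by rw [this]; ring⟩
  · have h2 : t = -(u ^ 2) := by linear_combination h'
    exact ⟨i * u, by linear_combination h2 - u ^ 2 * hi⟩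

lemma covering (i : K) (hi : i ^ 2 = -1) {c d z : K} (hc : ¬IsSquare c) (hd : ¬IsSquare d)
    (hz : ¬IsSquare z) (hcd : ¬Rel c d) : Rel z c ∨ Rel z d := by
  by_contra hcon
  push_neg at hcon
  obtain ⟨h1, h2⟩ := hcon
  apply hcd
  obtain ⟨t, ht0, htz⟩ := exists_sq_factor hz hc
  obtain ⟨t', ht0', htz'⟩ := exists_sq_factor hz hd
  have hts : ¬IsSquare t := by
    rintro ⟨w, hw⟩
    have hw0 : w ≠ 0 := by rintro rfl; simp at hw; exact ht0 hw
    exact h1 ⟨w, hw0, by rw [htz, hw]; ring⟩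
  have hts' : ¬IsSquare t' := by
    rintro ⟨w, hw⟩
    have hw0 : w ≠ 0 := by rintro rfl; simp at hw; exact ht0' hw
    exact h2 ⟨w, hw0, by rw [htz', hw]; ring⟩
  obtain ⟨s, hs⟩ := ns_mul_ns hts hts'
  have hs0 : s ≠ 0 := by
    rintro rfl; rw [mul_zero] at hs; exact mul_ne_zero ht0 ht0' hs
  have heq : t ^ 2 * c = t' ^ 2 * d := by linear_combination htz' - htz
  refine ⟨s * t⁻¹, mul_ne_zero hs0 (inv_ne_zero ht0), ?_⟩
  have key : c * t ^ 4 = s ^ 4 * d := by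
    linear_combination t ^ 2 * heq + d * (s * s + t * t') * hs
  field_simp
  linear_combination key



variable {K : Type*} [Field K] [Fintype K]



lemma sum_eq_zero_scale [DecidableEq K] (A : Finset K) (μ : K) (h0 : μ ≠ 0) (h1 : μ ≠ 1)
    (hcl : ∀ x ∈ A, μ * x ∈ A) : ∑ x ∈ A, x = 0 := by
  have hinj : Function.Injective (fun x : K => μ * x) := fun x y h => by
    exact mul_left_cancel₀ h0 h
  have himg : A.image (fun x => μ * x) = A := by
    apply Finset.eq_of_subset_of_card_le
    · rintro y hy
      obtain ⟨x, hx, rfl⟩ := Finset.mem_image.mp hy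
      exact hcl x hx
    · rw [Finset.card_image_of_injective _ hinj]
  have h2 : ∑ x ∈ A, x = μ * ∑ x ∈ A, x := by
    conv_lhs => rw [← himg]
    rw [Finset.sum_image (fun x _ y _ h => hinj h), Finset.mul_sum]
  have h3 : (μ - 1) * ∑ x ∈ A, x = 0 := by linear_combination -h2
  rcases mul_eq_zero.mp h3 with h | h
  · exact absurd (by linear_combination h) h1
  · exact h

lemma card_cast_zero_shift [DecidableEq K] (A B : Finset K) (h : ∀ x ∈ A, x + 1 ∈ B)
    (hcard : A.card = B.card) (hA : ∑ x ∈ A, x = 0) (hB : ∑ x ∈ B, x = 0) :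
    (A.card : K) = 0 := by
  have hinj : Function.Injective (fun x : K => x + 1) := add_left_injective 1
  have himg : A.image (fun x => x + 1) = B := by
    apply Finset.eq_of_subset_of_card_le
    · rintro y hy
      obtain ⟨x, hx, rfl⟩ := Finset.mem_image.mp hy
      exact h x hx
    · rw [Finset.card_image_of_injective _ hinj, hcard]
  have h2 : ∑ x ∈ B, x = ∑ x ∈ A, (x + 1) := by
    rw [← himg, Finset.sum_image (fun x _ y _ h => hinj h)]
  rw [hB, Finset.sum_add_distrib, hA, Finset.sum_const, zero_add, nsmul_eq_mul, mul_one] at h2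
  exact h2.symm








lemma card_ns [DecidableEq K] (h2 : (2 : K) ≠ 0) {a : K} (ha : ¬IsSquare a)
    (A : Finset K) (hA : ∀ z, z ∈ A ↔ ¬IsSquare z) :
    2 * A.card = Fintype.card K - 1 := by
  have ha0 := ns_ne_zero ha
  have hmap : ∀ u ∈ univ.filter (fun u : K => u ≠ 0), u ^ 2 * a ∈ A := by
    intro u hu
    have hu0 : u ≠ 0 := (mem_filter.mp hu).2
    rw [hA]
    have : ¬IsSquare (a * u ^ 2) := ns_mul_sq ha ⟨u, by ring⟩ (pow_ne_zero 2 hu0)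
    rwa [mul_comm] at this
  have hcount := Finset.card_eq_sum_card_fiberwise hmap
  have hfib : ∀ z ∈ A, ((univ.filter fun u : K => u ≠ 0).filter fun u => u ^ 2 * a = z).card = 2 := by
    intro z hz
    have hzns := (hA z).mp hz
    obtain ⟨t, ht0, htz⟩ := exists_sq_factor hzns ha
    have hset : ((univ.filter fun u : K => u ≠ 0).filter fun u => u ^ 2 * a = z) = {t, -t} := by
      ext u
      simp only [Finset.mem_filter, Finset.mem_univ, true_and, Finset.mem_insert,
        Finset.mem_singleton]
      constructor
      · rintro ⟨hu0, hu⟩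
        have he : u ^ 2 = t ^ 2 := by
          apply mul_right_cancel₀ ha0
          rw [hu, htz]
        have hfac : (u - t) * (u + t) = 0 := by linear_combination he
        rcases mul_eq_zero.mp hfac with h | h
        · left; linear_combination h
        · right; linear_combination h
      · rintro (rfl | rfl)
        · exact ⟨ht0, htz.symm⟩
        · exact ⟨neg_ne_zero.mpr ht0, by rw [htz]; ring⟩
    rw [hset, Finset.card_insert_of_notMem, Finset.card_singleton]
    simp only [Finset.mem_singleton]
    intro h
    apply ht0
    have : (2 : K) * t = 0 := by linear_combination h
    rcases mul_eq_zero.mp this with h' | h'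
    · exact absurd h' h2
    · exact h'
  rw [Finset.sum_congr rfl hfib, Finset.sum_const, smul_eq_mul] at hcount
  have hs : (univ.filter fun u : K => u ≠ 0).card = Fintype.card K - 1 := by
    rw [Finset.filter_ne', Finset.card_erase_of_mem (Finset.mem_univ 0), Finset.card_univ]
  omega

lemma card_class [DecidableEq K] (i : K) (hi : i ^ 2 = -1) (h2 : (2 : K) ≠ 0) {c : K}
    (hc : c ≠ 0) (A : Finset K) (hA : ∀ z, z ∈ A ↔ ∃ u : K, u ≠ 0 ∧ z = u ^ 4 * c) :
    4 * A.card = Fintype.card K - 1 := by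
  have hi0 : i ≠ 0 := by
    rintro rfl
    exact one_ne_zero (α := K) (by linear_combination hi)
  have hine1 : i ≠ 1 := by
    rintro rfl
    apply h2; linear_combination hi
  have hinem1 : i ≠ -1 := by
    rintro rfl
    apply h2; linear_combination hi
  have hmap : ∀ u ∈ univ.filter (fun u : K => u ≠ 0), u ^ 4 * c ∈ A := by
    intro u hu
    exact (hA _).mpr ⟨u, (mem_filter.mp hu).2, rfl⟩
  have hcount := Finset.card_eq_sum_card_fiberwise hmap
  have hfib : ∀ z ∈ A,
      ((univ.filter fun u : K => u ≠ 0).filter fun u => u ^ 4 * c = z).card = 4 := by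
    intro z hz
    obtain ⟨t, ht0, htz⟩ := (hA z).mp hz
    have hset : ((univ.filter fun u : K => u ≠ 0).filter fun u => u ^ 4 * c = z)
        = {t, -t, i * t, -(i * t)} := by
      ext u
      simp only [Finset.mem_filter, Finset.mem_univ, true_and, Finset.mem_insert,
        Finset.mem_singleton]
      constructor
      · rintro ⟨hu0, hu⟩
        have he : u ^ 4 = t ^ 4 := by
          apply mul_right_cancel₀ hc
          rw [hu, htz]
        have hfac : (u - t) * (u + t) * ((u - i * t) * (u + i * t)) = 0 := by
          linear_combination he - (u ^ 2 - t ^ 2) * t ^ 2 * hi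
        rcases mul_eq_zero.mp hfac with h | h
        · rcases mul_eq_zero.mp h with h' | h'
          · left; linear_combination h'
          · right; left; linear_combination h'
        · rcases mul_eq_zero.mp h with h' | h'
          · right; right; left; linear_combination h'
          · right; right; right; linear_combination h'
      · have hit0 : i * t ≠ 0 := mul_ne_zero hi0 ht0
        rintro (rfl | rfl | rfl | rfl)
        · exact ⟨ht0, htz.symm⟩
        · exact ⟨neg_ne_zero.mpr ht0, by rw [htz]; ring⟩
        · exact ⟨hit0, by rw [htz]; linear_combination (i ^ 2 - 1) * t ^ 4 * c * hi⟩
        · exact ⟨neg_ne_zero.mpr hit0, by rw [htz]; linear_combination (i ^ 2 - 1) * t ^ 4 * c * hi⟩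
    rw [hset]
    have d1 : t ≠ -t := by
      intro h; apply ht0
      have : (2 : K) * t = 0 := by linear_combination h
      rcases mul_eq_zero.mp this with h' | h'
      · exact absurd h' h2
      · exact h'
    have d2 : t ≠ i * t := by
      intro h
      have h' : i * t = 1 * t := by linear_combination -h
      exact hine1 (mul_right_cancel₀ ht0 h')
    have d3 : t ≠ -(i * t) := by
      intro h
      have h' : i * t = (-1) * t := by linear_combination h
      exact hinem1 (mul_right_cancel₀ ht0 h')
    have d4 : -t ≠ i * t := by
      intro h
      have h' : i * t = (-1) * t := by linear_combination -h
      exact hinem1 (mul_right_cancel₀ ht0 h')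
    have d5 : -t ≠ -(i * t) := by
      intro h
      have h' : i * t = 1 * t := by linear_combination h
      exact hine1 (mul_right_cancel₀ ht0 h')
    have d6 : i * t ≠ -(i * t) := by
      intro h
      apply mul_ne_zero hi0 ht0
      have : (2 : K) * (i * t) = 0 := by linear_combination h
      rcases mul_eq_zero.mp this with h' | h'
      · exact absurd h' h2
      · exact h'
    rw [Finset.card_insert_of_notMem (by simp [d1, d2, d3]),
      Finset.card_insert_of_notMem (by simp [d4, d5]),
      Finset.card_insert_of_notMem (by simp [d6]), Finset.card_singleton]
  rw [Finset.sum_congr rfl hfib, Finset.sum_const, smul_eq_mul] at hcount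
  have hs : (univ.filter fun u : K => u ≠ 0).card = Fintype.card K - 1 := by
    rw [Finset.filter_ne', Finset.card_erase_of_mem (Finset.mem_univ 0), Finset.card_univ]
  omega






lemma neg_one_fourth (hchar : ringChar K ≠ 2) (h8 : Fintype.card K % 8 = 1) {i : K}
    (hi : i ^ 2 = -1) : ∃ v : K, v ≠ 0 ∧ v ^ 4 = -1 := by
  have hi0 : i ≠ 0 := by
    rintro rfl
    exact one_ne_zero (α := K) (by linear_combination hi)
  have hi4 : i ^ 4 = 1 := by linear_combination (i ^ 2 - 1) * hi
  have hsq : IsSquare i := by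
    rw [FiniteField.isSquare_iff hchar hi0]
    have hdiv : Fintype.card K / 2 = 4 * (Fintype.card K / 8) := by omega
    rw [hdiv, pow_mul, hi4, one_pow]
  obtain ⟨v, hv⟩ := hsq
  have hv0 : v ≠ 0 := by
    rintro rfl; rw [mul_zero] at hv; exact hi0 hv
  exact ⟨v, hv0, by rw [show v ^ 4 = (v * v) ^ 2 by ring, ← hv, hi]⟩

lemma i_not_square (hchar : ringChar K ≠ 2) (h8 : Fintype.card K % 8 = 5) (h2 : (2 : K) ≠ 0)
    {i : K} (hi : i ^ 2 = -1) : ¬IsSquare i := by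
  have hi0 : i ≠ 0 := by
    rintro rfl
    exact one_ne_zero (α := K) (by linear_combination hi)
  have hi4 : i ^ 4 = 1 := by linear_combination (i ^ 2 - 1) * hi
  intro hsq
  rw [FiniteField.isSquare_iff hchar hi0] at hsq
  have hdiv : Fintype.card K / 2 = 4 * (Fintype.card K / 8) + 2 := by omega
  rw [hdiv, pow_add, pow_mul, hi4, one_pow, one_mul, hi] at hsq
  exact h2 (by linear_combination -hsq)

lemma cast_contra {m k : ℕ} (h : m * k = Fintype.card K - 1) (h0 : ((k : ℕ) : K) = 0) : False := by
  have h1 : ((Fintype.card K - 1 : ℕ) : K) = -1 := by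
    rw [Nat.cast_sub Fintype.card_pos, FiniteField.cast_card_eq_zero, Nat.cast_one, zero_sub]
  rw [← h, Nat.cast_mul, h0, mul_zero] at h1
  exact one_ne_zero (α := K) (by linear_combination h1)


lemma exists_pow4_ne_one (h5 : 5 < Fintype.card K) {i : K} (hi : i ^ 2 = -1) :
    ∃ u : K, u ≠ 0 ∧ u ^ 4 ≠ 1 := by
  classical
  by_contra hcon
  push_neg at hcon
  have hsub : (univ : Finset K) ⊆ {0, 1, -1, i, -i} := by
    intro u _
    simp only [Finset.mem_insert, Finset.mem_singleton]
    rcases eq_or_ne u 0 with h | h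
    · exact Or.inl h
    have h4 := hcon u h
    have hfac : (u - 1) * (u + 1) * ((u - i) * (u + i)) = 0 := by
      linear_combination h4 - (u ^ 2 - 1) * hi
    rcases mul_eq_zero.mp hfac with hf | hf
    · rcases mul_eq_zero.mp hf with hg | hg
      · exact Or.inr (Or.inl (by linear_combination hg))
      · exact Or.inr (Or.inr (Or.inl (by linear_combination hg)))
    · rcases mul_eq_zero.mp hf with hg | hg
      · exact Or.inr (Or.inr (Or.inr (Or.inl (by linear_combination hg))))
      · exact Or.inr (Or.inr (Or.inr (Or.inr (by linear_combination hg))))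
  have hcard := Finset.card_le_card hsub
  rw [Finset.card_univ] at hcard
  have c1 := Finset.card_insert_le (0 : K) ({1, -1, i, -i} : Finset K)
  have c2 := Finset.card_insert_le (1 : K) ({-1, i, -i} : Finset K)
  have c3 := Finset.card_insert_le (-1 : K) ({i, -i} : Finset K)
  have c4 := Finset.card_insert_le i ({-i} : Finset K)
  have c5 : ({-i} : Finset K).card = 1 := Finset.card_singleton _
  omega

end Stmt9Aux

open Stmt9Aux

theorem stmt_9 (q : ℕ) (hq_pp : IsPrimePow q) (hq1 : q % 4 = 1) (hq5 : 5 < q)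
    (K : Type*) [Field K] [Fintype K] (hK : Fintype.card K = q) :
    ∃ X Y : K,
      (∀ w : K, X ≠ w ^ 2) ∧                     -- X is a nonsquare in K
      (∀ w : K, Y ≠ w ^ 2) ∧                     -- Y is a nonsquare in K
      (∃ u : K, X = u ^ 4 * Y) ∧                 -- X/Y is a fourth power in K
      (X + 1 ≠ 0 ∧ ∃ w : K, X + 1 = w ^ 2) ∧     -- X + 1 is a nonzero square in K
      (∀ w : K, Y + 1 ≠ w ^ 2) := by             -- Y + 1 is a nonsquare in K
  classical
  by_contra hcon
  have hq0 : ((q : ℕ) : K) = 0 := by rw [← hK]; exact FiniteField.cast_card_eq_zero K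
  have h2 : (2 : K) ≠ 0 := by
    intro h
    obtain ⟨k, hk⟩ : ∃ k, q = 2 * k + 1 := ⟨q / 2, by omega⟩
    rw [hk] at hq0
    push_cast at hq0
    rw [h] at hq0
    simp at hq0
  have hchar : ringChar K ≠ 2 := by
    intro h
    apply h2
    have h22 : ((2 : ℕ) : K) = 0 := (ringChar.spec K 2).mpr (h ▸ dvd_refl _)
    simpa using h22
  have hm1 : IsSquare (-1 : K) := FiniteField.isSquare_neg_one_iff.mpr (by rw [hK]; omega)
  obtain ⟨i, hi⟩ := hm1
  have hi2 : i ^ 2 = -1 := by rw [sq]; exact hi.symm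
  have hi0 : i ≠ 0 := by rintro rfl; exact one_ne_zero (α := K) (by linear_combination hi2)
  have H : ∀ X Y : K, ¬IsSquare X → ¬IsSquare Y → (∃ u : K, X = u ^ 4 * Y) →
      IsSquare (X + 1) → IsSquare (Y + 1) := by
    intro X Y hX hY hu hX1
    by_contra hY1
    apply hcon
    refine ⟨X, Y, ?_, ?_, hu, ⟨?_, ?_⟩, ?_⟩
    · intro w hw; exact hX ⟨w, by rw [hw, pow_two]⟩
    · intro w hw; exact hY ⟨w, by rw [hw, pow_two]⟩
    · intro h0
      apply hX
      have hXm1 : X = -1 := by linear_combination h0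
      rw [hXm1]; exact ⟨i, hi⟩
    · obtain ⟨w, hw⟩ := hX1; exact ⟨w, by rw [hw, pow_two]⟩
    · intro w hw; exact hY1 ⟨w, by rw [hw, pow_two]⟩
  obtain ⟨a, ha⟩ := FiniteField.exists_nonsquare (F := K) hchar
  obtain ⟨c, hc, hc1⟩ : ∃ c : K, ¬IsSquare c ∧ ¬IsSquare (c + 1) := by
    by_cases h : IsSquare (a + 1)
    · have ha0 := ns_ne_zero ha
      have ham1 : a ≠ -1 := by rintro rfl; exact ha ⟨i, hi⟩
      have ha1 : a + 1 ≠ 0 := fun h0 => ham1 (by linear_combination h0)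
      refine ⟨a⁻¹, ?_, ?_⟩
      · rintro ⟨w, hw⟩
        refine ha ⟨w⁻¹, ?_⟩
        rw [← mul_inv, ← hw, inv_inv]
      · rintro ⟨s, hs⟩
        obtain ⟨r, hr⟩ := h
        have hr0 : r ≠ 0 := by rintro rfl; rw [mul_zero] at hr; exact ha1 hr
        have hs0 : s ≠ 0 := by
          rintro rfl; rw [mul_zero] at hs
          apply ham1
          have hinv : a⁻¹ = -1 := by linear_combination hs
          calc a = (a⁻¹)⁻¹ := (inv_inv a).symm
          _ = (-1 : K)⁻¹ := by rw [hinv]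
          _ = -1 := by norm_num
        refine ha ⟨r * s⁻¹, ?_⟩
        have key : a * (s * s) = r * r := by
          rw [← hs, mul_add, mul_inv_cancel₀ ha0, ← hr]; ring
        field_simp
        linear_combination key
    · exact ⟨a, ha, h⟩
  have hC : ∀ z : K, Rel z c → ¬IsSquare (z + 1) := by
    intro z hz hzs
    obtain ⟨u, hu0, hzu⟩ := hz
    exact hc1 (H z c (rel_ns hc ⟨u, hu0, hzu⟩) hc ⟨u, hzu⟩ hzs)
  by_cases hall : ∀ z : K, ¬IsSquare z → ¬IsSquare (z + 1)
  · -- every nonsquare has nonsquare successor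
    set A : Finset K := univ.filter (fun z : K => ¬IsSquare z) with hAdef
    have hmemA : ∀ z : K, z ∈ A ↔ ¬IsSquare z := by
      intro z; rw [hAdef, mem_filter]; simp
    have hclosed : ∀ x ∈ A, x + 1 ∈ A := fun x hx => (hmemA _).mpr (hall x ((hmemA x).mp hx))
    obtain ⟨u₀, hu₀0, hu₀1⟩ := exists_pow4_ne_one (K := K) (by omega) hi2
    have hμsq : IsSquare (u₀ ^ 4) := ⟨u₀ ^ 2, by ring⟩
    have hμ0 : u₀ ^ 4 ≠ 0 := pow_ne_zero 4 hu₀0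
    have hsum : ∑ x ∈ A, x = 0 := by
      apply sum_eq_zero_scale A (u₀ ^ 4) hμ0 hu₀1
      intro x hx
      rw [hmemA] at hx ⊢
      have hns := ns_mul_sq hx hμsq hμ0
      rwa [mul_comm] at hns
    have hcz := card_cast_zero_shift A A hclosed rfl hsum hsum
    have hcard2 := card_ns h2 ha A hmemA
    exact cast_contra hcard2 hcz
  · push_neg at hall
    obtain ⟨d, hd, hd1⟩ := hall
    have hD : ∀ z : K, Rel z d → IsSquare (z + 1) := by
      intro z hz
      obtain ⟨u, hu0, hzu⟩ := hz
      refine H d z hd (rel_ns hd ⟨u, hu0, hzu⟩) ⟨u⁻¹, ?_⟩ hd1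
      rw [hzu]; field_simp
    have hcd : ¬Rel c d := fun h => hc1 (hD c h)
    have hnegsq : ∀ z : K, ¬IsSquare z → ¬IsSquare (-z) := by
      rintro z hz ⟨w, hw⟩
      exact hz ⟨i * w, by linear_combination (-(w * w)) * hi2 - hw⟩
    have h8 : q % 8 = 1 ∨ q % 8 = 5 := by omega
    obtain ⟨u₀, hu₀0, hu₀1⟩ := exists_pow4_ne_one (K := K) (by omega) hi2
    rcases h8 with h8 | h8
    · -- q ≡ 1 (mod 8)
      obtain ⟨v, hv0, hv4⟩ := neg_one_fourth hchar (by rw [hK]; exact h8) hi2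
      have hstep : ∀ z : K, Rel z c → Rel (z + 1) c := by
        intro z hz
        have hz1ns : ¬IsSquare (z + 1) := hC z hz
        rcases covering i hi2 hc hd hz1ns hcd with h | h
        · exact h
        · exfalso
          have hneg : Rel (-(z + 1)) d := rel_trans ⟨v, hv0, by rw [hv4]; ring⟩ h
          have hsq := hD _ hneg
          rw [show -(z + 1) + 1 = -z by ring] at hsq
          exact hnegsq z (rel_ns hc hz) hsq
      set A : Finset K := univ.filter (fun z : K => Rel z c) with hAdef
      have hmemA : ∀ z : K, z ∈ A ↔ ∃ u : K, u ≠ 0 ∧ z = u ^ 4 * c := by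
        intro z; rw [hAdef, mem_filter]; simp [Stmt9Aux.Rel]
      have hclosed : ∀ x ∈ A, x + 1 ∈ A := by
        intro x hx
        rw [hmemA] at hx ⊢
        exact hstep x hx
      have hsum : ∑ x ∈ A, x = 0 := by
        apply sum_eq_zero_scale A (u₀ ^ 4) (pow_ne_zero 4 hu₀0) hu₀1
        intro x hx
        rw [hmemA] at hx ⊢
        obtain ⟨u, hu0, rfl⟩ := hx
        exact ⟨u₀ * u, mul_ne_zero hu₀0 hu0, by ring⟩
      have hcz := card_cast_zero_shift A A hclosed rfl hsum hsum
      have hcard4 := card_class i hi2 h2 (ns_ne_zero hc) A hmemA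
      exact cast_contra hcard4 hcz
    · -- q ≡ 5 (mod 8)
      have hins : ¬IsSquare i := i_not_square hchar (by rw [hK]; exact h8) h2 hi2
      have hnegc : ∀ z : K, Rel z c → Rel (-z) d := by
        intro z hz
        have hzns := rel_ns hc hz
        have hznz : ¬IsSquare (-z) := hnegsq z hzns
        rcases covering i hi2 hc hd hznz hcd with h | h
        · exfalso
          obtain ⟨u, hu, hzu⟩ := h
          obtain ⟨u', hu', hzu'⟩ := hz
          apply hins
          have hc0 := ns_ne_zero hc
          have huu : u ^ 4 + u' ^ 4 = 0 := by
            have hcc : (u ^ 4 + u' ^ 4) * c = 0 := by linear_combination -hzu - hzu'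
            rcases mul_eq_zero.mp hcc with h' | h'
            · exact h'
            · exact absurd h' hc0
          refine q4 hi2 (?_ : i ^ 2 = (u * u'⁻¹) ^ 4)
          rw [hi2]
          field_simp
          linear_combination -huu
        · exact h
      have hstep : ∀ z : K, Rel z c → Rel (z + 1) d := by
        intro z hz
        have hz1ns : ¬IsSquare (z + 1) := hC z hz
        rcases covering i hi2 hc hd hz1ns hcd with h | h
        · exfalso
          have hsq := hD _ (hnegc _ h)
          rw [show -(z + 1) + 1 = -z by ring] at hsq
          exact hnegsq z (rel_ns hc hz) hsq
        · exact h
      set A : Finset K := univ.filter (fun z : K => Rel z c) with hAdef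
      set B : Finset K := univ.filter (fun z : K => Rel z d) with hBdef
      have hmemA : ∀ z : K, z ∈ A ↔ ∃ u : K, u ≠ 0 ∧ z = u ^ 4 * c := by
        intro z; rw [hAdef, mem_filter]; simp [Stmt9Aux.Rel]
      have hmemB : ∀ z : K, z ∈ B ↔ ∃ u : K, u ≠ 0 ∧ z = u ^ 4 * d := by
        intro z; rw [hBdef, mem_filter]; simp [Stmt9Aux.Rel]
      have hclosed : ∀ x ∈ A, x + 1 ∈ B := by
        intro x hx
        rw [hmemA] at hx
        rw [hmemB]
        exact hstep x hx
      have hcardA := card_class i hi2 h2 (ns_ne_zero hc) A hmemA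
      have hcardB := card_class i hi2 h2 (ns_ne_zero hd) B hmemB
      have hAB : A.card = B.card := by omega
      have hsumA : ∑ x ∈ A, x = 0 := by
        apply sum_eq_zero_scale A (u₀ ^ 4) (pow_ne_zero 4 hu₀0) hu₀1
        intro x hx
        rw [hmemA] at hx ⊢
        obtain ⟨u, hu0, rfl⟩ := hx
        exact ⟨u₀ * u, mul_ne_zero hu₀0 hu0, by ring⟩
      have hsumB : ∑ x ∈ B, x = 0 := by
        apply sum_eq_zero_scale B (u₀ ^ 4) (pow_ne_zero 4 hu₀0) hu₀1
        intro x hx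
        rw [hmemB] at hx ⊢
        obtain ⟨u, hu0, rfl⟩ := hx
        exact ⟨u₀ * u, mul_ne_zero hu₀0 hu0, by ring⟩
      have hcz := card_cast_zero_shift A B hclosed hAB hsumA hsumB
      exact cast_contra hcardA hcz
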